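/- Let K₀ be a number field of degree d₀ with absolute discriminant D₀, let N ≥ 2 be an integer, let ζ_N be a primitive N-th root of unity, and let K = K₀(ζ_N) with absolute discriminant D. Then |D| ≤ N^{d₀N} |D₀|^{φ(N)}, where φ is Euler's totient function. -/

import Mathlib

open NumberField Module Polynomial


lemma aux_abs_discr_le (K : Type*) [Field K] [NumberField K]
    {ι : Type*} [Fintype ι] [DecidableEq ι] (x : Basis ι ℚ K)
    (hx : ∀ i, IsIntegral ℤ (x i)) :
    |(NumberField.discr K : ℚ)| ≤ |Algebra.discr ℚ ⇑x| := by
  classical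
  set B := (integralBasis K).reindex ((integralBasis K).indexEquiv x) with hB
  set P : Matrix ι ι ℚ := B.toMatrix ⇑x with hPdef
  have hE : Algebra.discr ℚ ⇑x = P.det ^ 2 * Algebra.discr ℚ ⇑(integralBasis K) := by
    conv_lhs => rw [← B.toMatrix_map_vecMul ⇑x]
    rw [Algebra.discr_of_matrix_vecMul, hB, Basis.coe_reindex, Algebra.discr_reindex]
  -- entries of P are integers
  have hint : ∀ i j, ∃ m : ℤ, P i j = (m : ℚ) := by
    intro i j
    have hxj : IsIntegral ℤ (x j) := hx j
    refine ⟨(RingOfIntegers.basis K).repr ⟨x j, hxj⟩ (((integralBasis K).indexEquiv x).symm i), ?_⟩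
    rw [hPdef, Basis.toMatrix_apply, hB, Basis.repr_reindex_apply]
    exact ((NumberField.integralBasis_repr_apply K ⟨x j, hxj⟩
      (((integralBasis K).indexEquiv x).symm i))).trans (by simp)
  choose P₀ hP₀ using hint
  have hPeq : P = (Matrix.of P₀).map ⇑(Int.castRingHom ℚ) := by
    ext i j; simpa using hP₀ i j
  have hPdet : P.det = ((Matrix.of P₀).det : ℚ) := by
    rw [hPeq, ← RingHom.mapMatrix_apply, ← RingHom.map_det]
    simp
  have hne : Algebra.discr ℚ ⇑x ≠ 0 := Algebra.discr_not_zero_of_basis ℚ x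
  have hmne : (Matrix.of P₀).det ≠ 0 := by
    intro h
    rw [hE, hPdet, h] at hne
    simp at hne
  have h1 : (1 : ℚ) ≤ ((Matrix.of P₀).det : ℚ) ^ 2 := by
    have : (1 : ℤ) ≤ (Matrix.of P₀).det ^ 2 := by
      rcases hmne.lt_or_gt with h | h <;> nlinarith
    exact_mod_cast this
  calc |(NumberField.discr K : ℚ)| = |Algebra.discr ℚ ⇑(integralBasis K)| := by
        rw [coe_discr]
    _ ≤ ((Matrix.of P₀).det : ℚ) ^ 2 * |Algebra.discr ℚ ⇑(integralBasis K)| := by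
        nlinarith [abs_nonneg (Algebra.discr ℚ ⇑(integralBasis K))]
    _ = |Algebra.discr ℚ ⇑x| := by
        rw [hE, hPdet, abs_mul, abs_pow, sq_abs]


lemma aux_discr_smulTower (K₀ K : Type*) [Field K₀] [Field K] [NumberField K₀] [NumberField K]
    [Algebra K₀ K] [IsScalarTower ℚ K₀ K]
    {ι₀ ι₁ : Type*} [Fintype ι₀] [Fintype ι₁] [DecidableEq ι₀] [DecidableEq ι₁]
    (b₀ : Basis ι₀ ℚ K₀) (c : Basis ι₁ K₀ K) :
    Algebra.discr ℚ ⇑(b₀.smulTower c) =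
      (Algebra.discr ℚ ⇑b₀) ^ (Fintype.card ι₁) *
        Algebra.norm ℚ (Algebra.discr K₀ ⇑c) := by
  classical
  have hFD : FiniteDimensional K₀ K := FiniteDimensional.right ℚ K₀ K
  -- index equivs
  let e₀ : ι₀ ≃ (K₀ →ₐ[ℚ] ℂ) := Fintype.equivOfCardEq (by
    rw [show Fintype.card ι₀ = finrank ℚ K₀ from (finrank_eq_card_basis b₀).symm]
    exact (AlgHom.card ℚ K₀ ℂ).symm)
  let eτ : ∀ τ : K₀ →ₐ[ℚ] ℂ, ι₁ ≃ (@AlgHom K₀ K ℂ _ _ _ _ τ.toRingHom.toAlgebra) := fun τ => by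
    letI : Algebra K₀ ℂ := τ.toRingHom.toAlgebra
    refine Fintype.equivOfCardEq ?_
    rw [show Fintype.card ι₁ = finrank K₀ K from (finrank_eq_card_basis c).symm]
    exact (AlgHom.card K₀ K ℂ).symm
  let eS : (K →ₐ[ℚ] ℂ) ≃ Σ τ : K₀ →ₐ[ℚ] ℂ, (@AlgHom K₀ K ℂ _ _ _ _ τ.toRingHom.toAlgebra) :=
    algHomEquivSigma
  let e : (ι₀ × ι₁) ≃ (K →ₐ[ℚ] ℂ) :=
    ((Equiv.prodCongr e₀ (Equiv.refl ι₁)).trans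
      ((Equiv.sigmaEquivProd _ ι₁).symm.trans (Equiv.sigmaCongrRight fun τ => eτ τ))).trans
      eS.symm
  -- matrices
  let A : Matrix ι₀ ι₀ ℂ := Algebra.embeddingsMatrixReindex ℚ ℂ ⇑b₀ e₀
  let W : ι₀ → Matrix ι₁ ι₁ ℂ := fun i =>
    letI : Algebra K₀ ℂ := (e₀ i).toRingHom.toAlgebra
    Algebra.embeddingsMatrixReindex K₀ ℂ ⇑c (eτ (e₀ i))
  have he : ∀ (p q : ι₀ × ι₁),
      (e q) ((b₀.smulTower c) p) = A p.1 q.1 * W q.1 p.2 q.2 := by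
    intro p q
    letI : Algebra K₀ ℂ := (e₀ q.1).toRingHom.toAlgebra
    have h0 : (e q) ((b₀.smulTower c) p) = (eτ (e₀ q.1) q.2) ((b₀.smulTower c) p) := rfl
    rw [h0, Basis.smulTower_apply, Algebra.smul_def, map_mul, AlgHom.commutes]
    rfl
  have key : Algebra.embeddingsMatrixReindex ℚ ℂ ⇑(b₀.smulTower c) e =
      (Matrix.kroneckerMap (· * ·) A (1 : Matrix ι₁ ι₁ ℂ)) *
        ((Matrix.blockDiagonal W).submatrix (Equiv.prodComm ι₀ ι₁) (Equiv.prodComm ι₀ ι₁)) := by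
    ext p q
    rw [show (Algebra.embeddingsMatrixReindex ℚ ℂ ⇑(b₀.smulTower c) e) p q
        = (e q) ((b₀.smulTower c) p) from rfl, he p q]
    rw [Matrix.mul_apply]
    rw [Fintype.sum_prod_type]
    simp only [Matrix.kroneckerMap_apply, Matrix.submatrix_apply, Equiv.prodComm_apply,
      Prod.swap_prod_mk, Matrix.blockDiagonal_apply, Matrix.one_apply, Prod.fst, Prod.snd]
    simp [mul_ite, ite_mul, Finset.sum_ite_eq, Finset.sum_ite_eq', mul_comm]
  have main := Algebra.discr_eq_det_embeddingsMatrixReindex_pow_two ℚ ℂ ⇑(b₀.smulTower c) e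
  rw [key, Matrix.det_mul, Matrix.det_submatrix_equiv_self, Matrix.det_blockDiagonal] at main
  have hk : (Matrix.kroneckerMap (· * ·) A (1 : Matrix ι₁ ι₁ ℂ)).det
      = A.det ^ Fintype.card ι₁ := by
    simpa using Matrix.det_kronecker A (1 : Matrix ι₁ ι₁ ℂ)
  have hA : A.det ^ 2 = algebraMap ℚ ℂ (Algebra.discr ℚ ⇑b₀) :=
    (Algebra.discr_eq_det_embeddingsMatrixReindex_pow_two ℚ ℂ ⇑b₀ e₀).symm
  have hW : ∀ i, (W i).det ^ 2 = (e₀ i) (Algebra.discr K₀ ⇑c) := by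
    intro i
    letI : Algebra K₀ ℂ := (e₀ i).toRingHom.toAlgebra
    exact (Algebra.discr_eq_det_embeddingsMatrixReindex_pow_two K₀ ℂ ⇑c (eτ (e₀ i))).symm
  have hnorm : algebraMap ℚ ℂ (Algebra.norm ℚ (Algebra.discr K₀ ⇑c)) =
      ∏ i : ι₀, (e₀ i) (Algebra.discr K₀ ⇑c) := by
    rw [Algebra.norm_eq_prod_embeddings]
    exact (Equiv.prod_comp e₀ _).symm
  apply (algebraMap ℚ ℂ).injective
  rw [map_mul, map_pow, ← hA, hnorm, main, hk]
  rw [mul_pow, ← pow_mul, ← Finset.prod_pow]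
  simp only [hW]
  rw [mul_comm (Fintype.card ι₁) 2, pow_mul]


lemma aux_norm_deriv_le (K₀ K : Type*) [Field K₀] [Field K] [NumberField K₀] [NumberField K]
    [Algebra K₀ K] [IsScalarTower ℚ K₀ K]
    (N : ℕ) (hN : 2 ≤ N) (ζ : K) (hζ : IsPrimitiveRoot ζ N) :
    |Algebra.norm ℚ (aeval ζ (derivative (minpoly K₀ ζ)))| ≤ (N : ℚ) ^ (finrank ℚ K) := by
  have hFD : FiniteDimensional K₀ K := FiniteDimensional.right ℚ K₀ K
  have hNz : (N : ℚ) ≠ 0 := by positivity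
  have hζN : ζ ^ N = 1 := hζ.pow_eq_one
  have hζne : ζ ≠ 0 := by
    intro h; rw [h, zero_pow (by omega)] at hζN; exact one_ne_zero hζN.symm
  set P : K₀[X] := minpoly K₀ ζ with hP
  have hPdvd : P ∣ (X ^ N - 1 : K₀[X]) := minpoly.dvd K₀ ζ (by simp [hζN])
  obtain ⟨Q, hQ⟩ := hPdvd
  have hXN : (X ^ N - 1 : K₀[X]).Monic := by
    simpa using monic_X_pow_sub_C (1 : K₀) (show N ≠ 0 by omega)
  have hPm : P.Monic := minpoly.monic (IsIntegral.of_finite K₀ ζ)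
  have hQm : Q.Monic := hPm.of_mul_monic_left (hQ ▸ hXN)
  -- derivative identity
  have hder : aeval ζ (derivative P) * aeval ζ Q = (N : K) * ζ ^ (N - 1) := by
    have h1 := congrArg (fun p => aeval ζ (derivative p)) hQ
    simp only [derivative_mul, map_add, map_mul, derivative_sub, derivative_one,
      derivative_X_pow, map_sub, aeval_C, aeval_X_pow, map_natCast, map_pow, aeval_X, map_zero] at h1
    rw [minpoly.aeval] at h1
    simp only [zero_mul, mul_zero, add_zero, zero_add, sub_zero] at h1
    linear_combination -h1
  -- `Q` has integral coefficients
  have hQcoeff : ∀ i, IsIntegral ℤ (Q.coeff i) := by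
    obtain ⟨q', hq'⟩ := IsIntegrallyClosed.eq_map_mul_C_of_dvd (R := 𝓞 K₀) K₀
      (f := (X ^ N - 1 : (𝓞 K₀)[X])) (by simpa using monic_X_pow_sub_C (1 : 𝓞 K₀) (show N ≠ 0 by omega))
      (g := Q) ⟨P, by rw [Polynomial.map_sub, Polynomial.map_pow, Polynomial.map_X,
        Polynomial.map_one, hQ, mul_comm]⟩
    rw [hQm.leadingCoeff, map_one, mul_one] at hq'
    intro i
    rw [← hq', coeff_map]
    exact (RingOfIntegers.isIntegral_coe (q'.coeff i))
  have hζint : IsIntegral ℤ ζ := hζ.isIntegral (by omega)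
  have hQζint : IsIntegral ℤ (aeval ζ Q) := by
    rw [aeval_eq_sum_range]
    refine IsIntegral.sum _ (fun i _ => ?_)
    rw [Algebra.smul_def]
    exact ((hQcoeff i).map (IsScalarTower.toAlgHom ℤ K₀ K)).mul (hζint.pow i)
  -- norm of `aeval ζ Q` is a nonzero integer
  have hQζne : aeval ζ Q ≠ 0 := by
    intro h
    rw [h, mul_zero] at hder
    have : (N : K) * ζ ^ (N - 1) ≠ 0 := by
      apply mul_ne_zero _ (pow_ne_zero _ hζne)
      exact_mod_cast (Nat.cast_ne_zero (R := K)).mpr (by omega)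
    exact this hder.symm
  obtain ⟨m, hm⟩ := IsIntegrallyClosed.isIntegral_iff.mp
    (Algebra.isIntegral_norm ℚ (L := K) hQζint)
  have hmabs : (1 : ℚ) ≤ |Algebra.norm ℚ (aeval ζ Q)| := by
    rw [← hm]
    have hm0 : m ≠ 0 := by
      intro h; rw [h] at hm
      exact (Algebra.norm_ne_zero_iff.mpr hQζne) (by exact_mod_cast hm.symm)
    rw [show ((algebraMap ℤ ℚ) m) = ((m : ℚ)) from rfl, ← Int.cast_abs]
    exact_mod_cast Int.one_le_abs hm0
  -- norm computation
  have hnormmul : Algebra.norm ℚ (aeval ζ (derivative P)) * Algebra.norm ℚ (aeval ζ Q)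
      = Algebra.norm ℚ ((N : K) * ζ ^ (N - 1)) := by
    rw [← map_mul, hder]
  have hnormN : Algebra.norm ℚ ((N : K)) = (N : ℚ) ^ (finrank ℚ K) := by
    rw [show ((N : K)) = algebraMap ℚ K (N : ℚ) by push_cast; ring, Algebra.norm_algebraMap]
  have hnormζ : |Algebra.norm ℚ ζ| = 1 := by
    have h1 : (Algebra.norm ℚ ζ) ^ N = 1 := by
      rw [← map_pow, hζN, map_one]
    have h2 : |Algebra.norm ℚ ζ| ^ N = 1 := by
      rw [← abs_pow, h1, abs_one]
    by_contra hne'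
    rcases lt_or_gt_of_ne hne' with h | h
    · have := pow_lt_one₀ (abs_nonneg (Algebra.norm ℚ ζ)) h (show N ≠ 0 by omega)
      rw [h2] at this; exact lt_irrefl _ this
    · have := one_lt_pow₀ h (show N ≠ 0 by omega)
      rw [h2] at this; exact lt_irrefl _ this
  have habs : |Algebra.norm ℚ (aeval ζ (derivative P))| * |Algebra.norm ℚ (aeval ζ Q)|
      = (N : ℚ) ^ (finrank ℚ K) := by
    rw [← abs_mul, hnormmul, map_mul, map_pow, abs_mul, abs_pow, hnormζ, one_pow, mul_one,
      hnormN, abs_of_nonneg (by positivity)]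
  calc |Algebra.norm ℚ (aeval ζ (derivative P))|
      ≤ |Algebra.norm ℚ (aeval ζ (derivative P))| * |Algebra.norm ℚ (aeval ζ Q)| :=
        le_mul_of_one_le_right (abs_nonneg _) hmabs
    _ = (N : ℚ) ^ (finrank ℚ K) := habs


/-- Let `K₀` be a number field of degree `d₀` and absolute discriminant `D₀`, let
`N ≥ 2`, let `ζ` be a primitive `N`-th root of unity, and let `K = K₀(ζ)` with
absolute discriminant `D`.  Then `|D| ≤ N ^ (d₀ N) * |D₀| ^ φ(N)`. -/
theorem abs_discr_adjoin_rootOfUnity_le (K₀ K : Type*) [Field K₀] [Field K]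
    [NumberField K₀] [NumberField K] [Algebra K₀ K]
    (N : ℕ) (hN : 2 ≤ N) (ζ : K) (hζ : IsPrimitiveRoot ζ N)
    (hgen : IntermediateField.adjoin K₀ {ζ} = ⊤) :
    |NumberField.discr K| ≤
      (N : ℤ) ^ (Module.finrank ℚ K₀ * N) * |NumberField.discr K₀| ^ Nat.totient N := by
  classical
  haveI : IsScalarTower ℚ K₀ K := IsScalarTower.of_algebraMap_eq' (Subsingleton.elim _ _)
  haveI hFD : FiniteDimensional K₀ K := FiniteDimensional.right ℚ K₀ K
  have hζK₀ : IsIntegral K₀ ζ := IsIntegral.of_finite K₀ ζ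
  -- power basis of `K` over `K₀` generated by `ζ`
  let pb : PowerBasis K₀ K := (IntermediateField.adjoin.powerBasis hζK₀).map
    ((IntermediateField.equivOfEq hgen).trans IntermediateField.topEquiv)
  have hpbgen : pb.gen = ζ := by
    simp [pb, IntermediateField.adjoin.powerBasis_gen]
  set n := pb.dim with hndef
  have hn : finrank K₀ K = n := pb.finrank
  -- degree bounds
  have hdim : n = (minpoly K₀ ζ).natDegree := by
    simp [hndef, pb, IntermediateField.adjoin.powerBasis_dim]
  have hnt : n ≤ N.totient := by
    have hcyc : minpoly K₀ ζ ∣ Polynomial.cyclotomic N K₀ := by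
      refine minpoly.dvd K₀ ζ ?_
      rw [Polynomial.aeval_def, Polynomial.eval₂_eq_eval_map, Polynomial.map_cyclotomic]
      exact hζ.isRoot_cyclotomic (by omega)
    have := Polynomial.natDegree_le_of_dvd hcyc (Polynomial.cyclotomic_ne_zero N K₀)
    rwa [Polynomial.natDegree_cyclotomic, ← hdim] at this
  have hnN : n ≤ N := hnt.trans (Nat.totient_le N)
  -- the product basis
  set b₀ := integralBasis K₀ with hb₀
  set xB := b₀.smulTower pb.basis with hxB
  have hζint : IsIntegral ℤ ζ := hζ.isIntegral (by omega)
  have hxint : ∀ p, IsIntegral ℤ (xB p) := by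
    rintro ⟨i, j⟩
    rw [hxB, Basis.smulTower_apply, Algebra.smul_def, PowerBasis.basis_eq_pow, hpbgen]
    refine IsIntegral.mul ?_ (hζint.pow _)
    rw [hb₀, integralBasis_apply, ← IsScalarTower.algebraMap_apply]
    exact ((RingOfIntegers.basis K₀ i).isIntegral_coe).map (IsScalarTower.toAlgHom ℤ K₀ K)
  have h1 : |(discr K : ℚ)| ≤ |Algebra.discr ℚ ⇑xB| := aux_abs_discr_le K xB hxint
  have h2 := aux_discr_smulTower K₀ K b₀ pb.basis
  have h3 := Algebra.discr_powerBasis_eq_norm (K := K₀) (L := K) (pb := pb)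
  set e' := finrank K₀ K * (finrank K₀ K - 1) / 2 with he'
  have h4 : |Algebra.norm ℚ (Algebra.discr K₀ ⇑pb.basis)|
      = |Algebra.norm ℚ (aeval ζ (derivative (minpoly K₀ ζ)))| := by
    rw [h3, hpbgen, map_mul, abs_mul, Algebra.norm_norm]
    have hx : (Algebra.norm ℚ ((-1 : K₀) ^ e')) * (Algebra.norm ℚ ((-1 : K₀) ^ e')) = 1 := by
      rw [← map_mul, ← pow_add, ← two_mul, pow_mul]
      norm_num
    rcases mul_self_eq_one_iff.mp hx with hx1 | hx1 <;> rw [hx1] <;> norm_num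
  have h5 := aux_norm_deriv_le K₀ K N hN ζ hζ
  have hrank : finrank ℚ K = finrank ℚ K₀ * n := by
    rw [← finrank_mul_finrank ℚ K₀ K, hn]
  have hD₀ : (1 : ℚ) ≤ |(discr K₀ : ℚ)| := by
    rw [← Int.cast_abs]
    exact_mod_cast Int.one_le_abs (discr_ne_zero K₀)
  have hN1 : (1 : ℚ) ≤ (N : ℚ) := by exact_mod_cast (by omega : 1 ≤ N)
  have hchain : |(discr K : ℚ)| ≤ (N : ℚ) ^ (finrank ℚ K₀ * N) * |(discr K₀ : ℚ)| ^ N.totient := by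
    calc |(discr K : ℚ)| ≤ |Algebra.discr ℚ ⇑xB| := h1
      _ = |Algebra.discr ℚ ⇑b₀| ^ n * |Algebra.norm ℚ (Algebra.discr K₀ ⇑pb.basis)| := by
          rw [hxB, h2, abs_mul, abs_pow, Fintype.card_fin]
      _ = |(discr K₀ : ℚ)| ^ n * |Algebra.norm ℚ (aeval ζ (derivative (minpoly K₀ ζ)))| := by
          rw [h4, hb₀, ← coe_discr]
      _ ≤ |(discr K₀ : ℚ)| ^ n * (N : ℚ) ^ (finrank ℚ K) := by
          exact mul_le_mul_of_nonneg_left h5 (by positivity)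
      _ ≤ (N : ℚ) ^ (finrank ℚ K₀ * N) * |(discr K₀ : ℚ)| ^ N.totient := by
          rw [hrank, mul_comm (|(discr K₀ : ℚ)| ^ n)]
          have e1 : |(discr K₀ : ℚ)| ^ n ≤ |(discr K₀ : ℚ)| ^ N.totient :=
            pow_le_pow_right₀ hD₀ hnt
          have e2 : (N : ℚ) ^ (finrank ℚ K₀ * n) ≤ (N : ℚ) ^ (finrank ℚ K₀ * N) :=
            pow_le_pow_right₀ hN1 (Nat.mul_le_mul_left _ hnN)
          exact mul_le_mul e2 e1 (by positivity) (by positivity)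
  have : ((|discr K| : ℤ) : ℚ) ≤ (((N : ℤ) ^ (finrank ℚ K₀ * N) * |discr K₀| ^ N.totient : ℤ) : ℚ) := by
    push_cast
    exact hchain
  exact_mod_cast this
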